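/- Let T₁ ⊆ T₂ be two closed extensions of the same densely defined operator (i.e. T₂ extends T₁), both Fredholm as operators from their graph-norm domains to H₂. Then dom(T₂)/dom(T₁) is finite-dimensional and ind(T₂) = ind(T₁) + dim(dom(T₂)/dom(T₁)). -/

import Mathlib

/-- A continuous linear map is Fredholm if it has finite-dimensional kernel, closed range
and finite-dimensional cokernel. -/
def IsFredholmOp {X Y : Type*} [NormedAddCommGroup X] [NormedAddCommGroup Y]
    [NormedSpace ℂ X] [NormedSpace ℂ Y] (T : X →L[ℂ] Y) : Prop :=
  FiniteDimensional ℂ (LinearMap.ker (T : X →ₗ[ℂ] Y)) ∧ IsClosed (LinearMap.range (T : X →ₗ[ℂ] Y) : Set Y) ∧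
    FiniteDimensional ℂ (Y ⧸ LinearMap.range (T : X →ₗ[ℂ] Y))

/-- The Fredholm index `dim ker − dim coker`. -/
noncomputable def fredInd {X Y : Type*} [NormedAddCommGroup X] [NormedAddCommGroup Y]
    [NormedSpace ℂ X] [NormedSpace ℂ Y] (T : X →L[ℂ] Y) : ℤ :=
  (Module.finrank ℂ (LinearMap.ker (T : X →ₗ[ℂ] Y)) : ℤ) - Module.finrank ℂ (Y ⧸ LinearMap.range (T : X →ₗ[ℂ] Y))


open Module LinearMap

theorem stmt2_aux {K V W : Type*} [Field K] [AddCommGroup V] [Module K V]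
    [AddCommGroup W] [Module K W] (T : V →ₗ[K] W) (D₁ : Submodule K V)
    (hk2 : FiniteDimensional K (LinearMap.ker T))
    (hc2 : FiniteDimensional K (W ⧸ LinearMap.range T))
    (hk1 : FiniteDimensional K (LinearMap.ker (T ∘ₗ D₁.subtype)))
    (hc1 : FiniteDimensional K (W ⧸ LinearMap.range (T ∘ₗ D₁.subtype))) :
    FiniteDimensional K (V ⧸ D₁) ∧
      (finrank K (LinearMap.ker T) : ℤ) - finrank K (W ⧸ LinearMap.range T) =
        ((finrank K (LinearMap.ker (T ∘ₗ D₁.subtype)) : ℤ) -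
          finrank K (W ⧸ LinearMap.range (T ∘ₗ D₁.subtype))) + finrank K (V ⧸ D₁) := by
  set T₁ := T ∘ₗ D₁.subtype with hT₁def
  set kT := LinearMap.ker T
  set rT := LinearMap.range T
  set rT₁ := LinearMap.range T₁ with hrT₁def
  have hle : rT₁ ≤ rT := by rintro w ⟨y, rfl⟩; exact ⟨(y : V), rfl⟩
  set f : kT →ₗ[K] V ⧸ D₁ := D₁.mkQ ∘ₗ kT.subtype with hfdef
  have hmem : D₁ ≤ rT₁.comap T := fun x hx => ⟨⟨x, hx⟩, rfl⟩
  set g : (V ⧸ D₁) →ₗ[K] W ⧸ rT₁ := Submodule.mapQ D₁ rT₁ T hmem with hgdef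
  -- kernel of g = range of f
  have hker : LinearMap.ker g = LinearMap.range f := by
    ext x
    obtain ⟨v, rfl⟩ := Submodule.Quotient.mk_surjective D₁ x
    constructor
    · intro hx
      rw [LinearMap.mem_ker, hgdef, Submodule.mapQ_apply, Submodule.Quotient.mk_eq_zero] at hx
      obtain ⟨y, hy⟩ := hx
      refine ⟨⟨v - (y : V), ?_⟩, ?_⟩
      · rw [LinearMap.mem_ker, map_sub, show T (y : V) = T₁ y from rfl, hy, sub_self]
      · show D₁.mkQ (v - (y : V)) = Submodule.Quotient.mk v
        rw [Submodule.mkQ_apply, Submodule.Quotient.eq]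
        simpa using y.2
    · rintro ⟨z, hz⟩
      rw [LinearMap.mem_ker, hgdef, Submodule.mapQ_apply, Submodule.Quotient.mk_eq_zero]
      have hz' : v - (z : V) ∈ D₁ := by
        rw [← Submodule.Quotient.eq]
        exact hz.symm
      refine ⟨⟨v - (z : V), hz'⟩, ?_⟩
      have hz0 : T (z : V) = 0 := z.2
      show T (v - (z : V)) = T v
      rw [map_sub, hz0, sub_zero]
  -- range of g
  have hrange : LinearMap.range g = rT.map rT₁.mkQ := by
    have h1 : g ∘ₗ D₁.mkQ = rT₁.mkQ ∘ₗ T := Submodule.mapQ_mkQ D₁ rT₁ T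
    have h2 : LinearMap.range g = LinearMap.range (g ∘ₗ D₁.mkQ) :=
      (LinearMap.range_comp_of_range_eq_top g D₁.range_mkQ).symm
    rw [h2, h1, LinearMap.range_comp]
  -- the kernel equivalence
  let e₁ : (LinearMap.ker T₁) ≃ₗ[K] (LinearMap.ker f) :=
    { toFun := fun y => ⟨⟨(y : D₁), y.2⟩, by
        have hy : ((y : D₁) : V) ∈ D₁ := (y : D₁).2
        show D₁.mkQ ((y : D₁) : V) = 0
        rw [Submodule.mkQ_apply, Submodule.Quotient.mk_eq_zero]
        exact hy⟩
      map_add' := fun a b => rfl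
      map_smul' := fun c a => rfl
      invFun := fun x => ⟨⟨((x : kT) : V), by
          have hx : D₁.mkQ ((x : kT) : V) = 0 := x.2
          rwa [Submodule.mkQ_apply, Submodule.Quotient.mk_eq_zero] at hx⟩,
        (x : kT).2⟩
      left_inv := fun a => rfl
      right_inv := fun a => rfl }
  -- quotient-of-quotient equivalence
  let e₂ : ((W ⧸ rT₁) ⧸ rT.map rT₁.mkQ) ≃ₗ[K] (W ⧸ rT) :=
    Submodule.quotientQuotientEquivQuotient rT₁ rT hle
  -- finite dimensionality of V ⧸ D₁
  have hfd_kerg : FiniteDimensional K (LinearMap.ker g) := by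
    rw [hker]; infer_instance
  have hfd_rangeg : FiniteDimensional K (LinearMap.range g) := by
    rw [hrange]
    infer_instance
  have hfd_quot : FiniteDimensional K ((V ⧸ D₁) ⧸ LinearMap.ker g) :=
    Module.Finite.equiv g.quotKerEquivRange.symm
  have hfd : FiniteDimensional K (V ⧸ D₁) := by
    have hr := Submodule.rank_quotient_add_rank (LinearMap.ker g)
    refine IsNoetherian.iff_fg.mp (IsNoetherian.iff_rank_lt_aleph0.mpr ?_)
    rw [← hr]
    exact Cardinal.add_lt_aleph0 (rank_lt_aleph0 K _) (rank_lt_aleph0 K _)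
  refine ⟨hfd, ?_⟩
  -- rank-nullity computations
  have ha : finrank K (LinearMap.range f) + finrank K (LinearMap.ker f) = finrank K kT :=
    LinearMap.finrank_range_add_finrank_ker f
  have hb : finrank K (LinearMap.range g) + finrank K (LinearMap.ker g) =
      finrank K (V ⧸ D₁) := LinearMap.finrank_range_add_finrank_ker g
  have hc : finrank K ((W ⧸ rT₁) ⧸ rT.map rT₁.mkQ) + finrank K (rT.map rT₁.mkQ) =
      finrank K (W ⧸ rT₁) := Submodule.finrank_quotient_add_finrank _
  have hkf : finrank K (LinearMap.ker f) = finrank K (LinearMap.ker T₁) :=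
    (LinearEquiv.finrank_eq e₁).symm
  have he₂ : finrank K ((W ⧸ rT₁) ⧸ rT.map rT₁.mkQ) = finrank K (W ⧸ rT) :=
    LinearEquiv.finrank_eq e₂
  have hkg : finrank K (LinearMap.ker g) = finrank K (LinearMap.range f) := by rw [hker]
  have hrg : finrank K (LinearMap.range g) = finrank K (rT.map rT₁.mkQ) := by rw [hrange]
  omega

/-- Let `T₁ ⊆ T₂` be two closed extensions of the same densely defined
operator, both Fredholm from their graph-norm domains.  We model `T₂` as a continuous
linear map `T : D →L[ℂ] H₂` on its graph-norm domain `D` (a Hilbert space, injectively and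
densely mapped into `H₁` by `ι`) and `T₁` as the restriction of `T` to a closed subspace
`D₁ ⊆ D` (the graph-norm domain of `T₁`).  Then `dom(T₂)/dom(T₁) = D ⧸ D₁` is
finite-dimensional and `ind(T₂) = ind(T₁) + dim (D ⧸ D₁)`. -/
theorem stmt_2 {H₁ H₂ D : Type*}
    [NormedAddCommGroup H₁] [InnerProductSpace ℂ H₁] [CompleteSpace H₁]
    [NormedAddCommGroup H₂] [InnerProductSpace ℂ H₂] [CompleteSpace H₂]
    [NormedAddCommGroup D] [InnerProductSpace ℂ D] [CompleteSpace D]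
    (ι : D →L[ℂ] H₁) (hinj : Function.Injective ι) (hdense : DenseRange ι)
    (T : D →L[ℂ] H₂)
    (hgraph : ∀ u : D, ‖u‖ ^ 2 = ‖ι u‖ ^ 2 + ‖T u‖ ^ 2)
    (D₁ : Submodule ℂ D) (hD₁ : IsClosed (D₁ : Set D)) (hdense₁ : DenseRange (ι.comp D₁.subtypeL))
    (hT₂ : IsFredholmOp T) (hT₁ : IsFredholmOp (T.comp D₁.subtypeL)) :
    FiniteDimensional ℂ (D ⧸ D₁) ∧
      fredInd T = fredInd (T.comp D₁.subtypeL) + Module.finrank ℂ (D ⧸ D₁) := by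
  obtain ⟨hk2, -, hc2⟩ := hT₂
  obtain ⟨hk1, -, hc1⟩ := hT₁
  unfold fredInd
  exact stmt2_aux (T : D →ₗ[ℂ] H₂) D₁ hk2 hc2 hk1 hc1
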